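/- Let X be a measurable space. For probability measures P, Q on X, define the Jensen–Shannon distance d_JS(P,Q) = √( (1/2) KL(P ‖ M) + (1/2) KL(Q ‖ M) ), where M = (1/2)(P + Q) and KL denotes the Kullback–Leibler divergence. For each domain D, given for every label y ∈ {0,1} and sensitive attribute a ∈ {0,1} a conditional input distribution P_D^{X|Y=y,A=a} on X, define the equal odds gap of a measurable function f : X → [0,1] by EOGAP_D(f) = Σ_{y∈{0,1}} | E_{x∼P_D^{X|Y=y,A=0}}[f(x)] − E_{x∼P_D^{X|Y=y,A=1}}[f(x)] |. Then for any measurable f : X → [0,1], any source domain S and any target domain T: EOGAP_T(f) ≤ EOGAP_S(f) + √2 · Σ_{y∈{0,1}} Σ_{a∈{0,1}} d_JS( P_T^{X|Y=y,A=a}, P_S^{X|Y=y,A=a} ). -/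

import Mathlib

open MeasureTheory
open scoped ENNReal Classical

/-- Kullback–Leibler divergence `KL(P‖Q) = E_{x∼P}[ln (dP/dQ)(x)]`, taken to be `+∞`
when `P` is not absolutely continuous with respect to `Q` (or the log-likelihood
ratio is not integrable). -/
noncomputable def klDivergence {X : Type*} [MeasurableSpace X]
    (P Q : Measure X) : ℝ≥0∞ :=
  if P ≪ Q ∧ Integrable (llr P Q) P then ENNReal.ofReal (∫ x, llr P Q x ∂P) else ⊤

/-- Jensen–Shannon distance
`d_JS(P,Q) = √((1/2) KL(P‖M) + (1/2) KL(Q‖M))` with `M = (1/2)(P+Q)`. -/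
noncomputable def jsDist {X : Type*} [MeasurableSpace X] (P Q : Measure X) : ℝ :=
  Real.sqrt ((1 / 2) * (klDivergence P ((2 : ℝ≥0∞)⁻¹ • (P + Q))).toReal
    + (1 / 2) * (klDivergence Q ((2 : ℝ≥0∞)⁻¹ • (P + Q))).toReal)

/-- Equal odds gap of a score `f` on a domain specifying, for each label
`y ∈ {0,1}` and sensitive attribute `a ∈ {0,1}`, a conditional input distribution
`P y a`: `EOGAP(f) = Σ_y |E_{P y 0}[f] − E_{P y 1}[f]|`. -/
noncomputable def eoGap {X : Type*} [MeasurableSpace X]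
    (f : X → ℝ) (P : Bool → Bool → Measure X) : ℝ :=
  ∑ y : Bool, |(∫ x, f x ∂(P y false)) - ∫ x, f x ∂(P y true)|

section AuxLemmas


private noncomputable def auxG : ℝ → ℝ := fun s => Real.log (1+s) - Real.log (1-s) - 2*s

private lemma auxG_hasDerivAt {x : ℝ} (h1 : (1:ℝ)+x ≠ 0) (h2 : (1:ℝ)-x ≠ 0) :
    HasDerivAt auxG (1/(1+x) + 1/(1-x) - 2) x := by
  have d1 : HasDerivAt (fun s : ℝ => Real.log (1+s)) (1/(1+x)) x := by
    simpa using (HasDerivAt.log ((hasDerivAt_id x).const_add 1) h1)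
  have d2 : HasDerivAt (fun s : ℝ => Real.log (1-s)) (-1/(1-x)) x := by
    simpa using (HasDerivAt.log ((hasDerivAt_id x).const_sub 1) h2)
  have d3 : HasDerivAt (fun s : ℝ => 2*s) 2 x := by
    simpa using (hasDerivAt_id x).const_mul 2
  have := (d1.sub d2).sub d3
  exact this.congr_deriv (by ring)

private lemma aux_log_ineq1 : ∀ s ∈ Set.Ico (0:ℝ) 1, 2*s ≤ Real.log (1+s) - Real.log (1-s) := by
  have hmono : MonotoneOn auxG (Set.Ico (0:ℝ) 1) := by
    apply monotoneOn_of_deriv_nonneg (convex_Ico 0 1)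
    · apply ContinuousOn.sub (ContinuousOn.sub ?_ ?_)
      · exact (continuous_const.mul continuous_id).continuousOn
      · exact Real.continuousOn_log.comp (continuous_const.add continuous_id).continuousOn
          (fun x hx => by simp only [Set.mem_compl_iff, Set.mem_singleton_iff, id_eq]
                          nlinarith [hx.1, hx.2])
      · exact Real.continuousOn_log.comp (continuous_const.sub continuous_id).continuousOn
          (fun x hx => by simp only [Set.mem_compl_iff, Set.mem_singleton_iff, id_eq]
                          nlinarith [hx.1, hx.2])
    · rw [interior_Ico]
      intro x hx
      exact (auxG_hasDerivAt (by nlinarith [hx.1, hx.2]) (by nlinarith [hx.1, hx.2])).differentiableAt.differentiableWithinAt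
    · rw [interior_Ico]
      intro x hx
      have h1 : (0:ℝ) < 1+x := by nlinarith [hx.1, hx.2]
      have h2 : (0:ℝ) < 1-x := by nlinarith [hx.1, hx.2]
      rw [(auxG_hasDerivAt h1.ne' h2.ne').deriv]
      have : 1/(1+x) + 1/(1-x) - 2 = 2*x^2/((1+x)*(1-x)) := by field_simp; ring
      rw [this]; positivity
  intro s hs
  have h0 : auxG 0 ≤ auxG s := hmono (by norm_num) hs hs.1
  have hz : auxG 0 = 0 := by simp [auxG]
  simp only [auxG] at h0 hz
  linarith

private noncomputable def auxF : ℝ → ℝ :=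
  fun t => (1+t) * Real.log (1+t) + (1-t) * Real.log (1-t) - t^2

private lemma auxF_hasDerivAt {x : ℝ} (h1 : (1:ℝ)+x ≠ 0) (h2 : (1:ℝ)-x ≠ 0) :
    HasDerivAt auxF (Real.log (1+x) - Real.log (1-x) - 2*x) x := by
  have l1 : HasDerivAt (fun s : ℝ => Real.log (1+s)) (1/(1+x)) x := by
    simpa using (HasDerivAt.log ((hasDerivAt_id x).const_add 1) h1)
  have l2 : HasDerivAt (fun s : ℝ => Real.log (1-s)) (-1/(1-x)) x := by
    simpa using (HasDerivAt.log ((hasDerivAt_id x).const_sub 1) h2)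
  have a1 : HasDerivAt (fun s : ℝ => 1+s) 1 x := (hasDerivAt_id x).const_add 1
  have a2 : HasDerivAt (fun s : ℝ => 1-s) (-1) x := by
    simpa using (hasDerivAt_id x).const_sub 1
  have p1 := a1.mul l1
  have p2 := a2.mul l2
  have sq : HasDerivAt (fun s : ℝ => s^2) (2*x) x := by
    simpa [mul_comm] using hasDerivAt_pow 2 x
  have := (p1.add p2).sub sq
  exact this.congr_deriv (by field_simp; ring)

private lemma aux_log_ineq2 :
    ∀ t ∈ Set.Icc (0:ℝ) 1, t^2 ≤ (1+t) * Real.log (1+t) + (1-t) * Real.log (1-t) := by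
  have hIco : ∀ t ∈ Set.Ico (0:ℝ) 1, 0 ≤ auxF t := by
    have hmono : MonotoneOn auxF (Set.Ico (0:ℝ) 1) := by
      apply monotoneOn_of_deriv_nonneg (convex_Ico 0 1)
      · apply ContinuousOn.sub (ContinuousOn.add ?_ ?_)
        · exact (continuous_pow 2).continuousOn
        · exact (continuous_const.add continuous_id).continuousOn.mul
            (Real.continuousOn_log.comp (continuous_const.add continuous_id).continuousOn
              (fun x hx => by simp only [Set.mem_compl_iff, Set.mem_singleton_iff, id_eq]
                              nlinarith [hx.1, hx.2]))
        · exact (continuous_const.sub continuous_id).continuousOn.mul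
            (Real.continuousOn_log.comp (continuous_const.sub continuous_id).continuousOn
              (fun x hx => by simp only [Set.mem_compl_iff, Set.mem_singleton_iff, id_eq]
                              nlinarith [hx.1, hx.2]))
      · rw [interior_Ico]
        intro x hx
        exact (auxF_hasDerivAt (by nlinarith [hx.1, hx.2]) (by nlinarith [hx.1, hx.2])).differentiableAt.differentiableWithinAt
      · rw [interior_Ico]
        intro x hx
        have h1 : (0:ℝ) < 1+x := by nlinarith [hx.1, hx.2]
        have h2 : (0:ℝ) < 1-x := by nlinarith [hx.1, hx.2]
        rw [(auxF_hasDerivAt h1.ne' h2.ne').deriv]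
        have := aux_log_ineq1 x ⟨hx.1.le, hx.2⟩
        linarith
    intro t ht
    have h0 : auxF 0 ≤ auxF t := hmono (by norm_num) ht ht.1
    have hz : auxF 0 = 0 := by simp [auxF]
    linarith
  intro t ht
  rcases eq_or_lt_of_le ht.2 with h1 | h1
  · subst h1
    simp only [show (1:ℝ)-1 = 0 by norm_num, Real.log_zero, mul_zero, add_zero, one_pow]
    have := Real.log_two_gt_d9
    have h2 : Real.log (1+1) = Real.log 2 := by norm_num
    rw [h2]
    nlinarith
  · have := hIco t ⟨ht.1, h1⟩
    simp only [auxF] at this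
    linarith

/-- Key entropy inequality: if `a+b = 2` with `a, b ≥ 0` then
`(a-1)² ≤ a log a + b log b`. -/
private lemma entropy_ineq {a b : ℝ} (ha : 0 ≤ a) (hb : 0 ≤ b) (hab : a + b = 2) :
    (a-1)^2 ≤ a * Real.log a + b * Real.log b := by
  rcases le_total 1 a with h | h
  · have := aux_log_ineq2 (a-1) ⟨by linarith, by linarith⟩
    have h1 : (1:ℝ) + (a-1) = a := by ring
    have h2 : (1:ℝ) - (a-1) = b := by linarith
    rw [h1, h2] at this
    linarith [this]
  · have := aux_log_ineq2 (b-1) ⟨by linarith, by linarith⟩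
    have h1 : (1:ℝ) + (b-1) = b := by ring
    have h2 : (1:ℝ) - (b-1) = a := by linarith
    rw [h1, h2] at this
    nlinarith [this]


private lemma abs_mul_log_le_two {t : ℝ} (ht0 : 0 ≤ t) (ht2 : t ≤ 2) :
    |t * Real.log t| ≤ 2 := by
  rcases eq_or_lt_of_le ht0 with h | h
  · simp [← h]
  rcases le_total t 1 with h1 | h1
  · have hlog : Real.log t ≤ 0 := Real.log_nonpos ht0 h1
    have hle : Real.log t⁻¹ ≤ t⁻¹ - 1 := Real.log_le_sub_one_of_pos (by positivity)
    rw [Real.log_inv] at hle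
    rw [abs_of_nonpos (mul_nonpos_of_nonneg_of_nonpos ht0 hlog)]
    have ht' : t * (t⁻¹ - 1) = 1 - t := by field_simp
    nlinarith [mul_le_mul_of_nonneg_left hle ht0]
  · have hle : Real.log t ≤ t - 1 := Real.log_le_sub_one_of_pos h
    have hlog0 : 0 ≤ Real.log t := Real.log_nonneg h1
    rw [abs_of_nonneg (mul_nonneg ht0 hlog0)]
    nlinarith

private lemma abs_integral_sub_le {X : Type*} [MeasurableSpace X]
    (f : X → ℝ) (hmeas : Measurable f) (hf01 : ∀ x, f x ∈ Set.Icc (0:ℝ) 1)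
    (P Q : Measure X) [IsProbabilityMeasure P] [IsProbabilityMeasure Q] :
    |(∫ x, f x ∂P) - ∫ x, f x ∂Q| ≤ Real.sqrt 2 * jsDist P Q := by
  set M : Measure X := (2 : ℝ≥0∞)⁻¹ • (P + Q) with hM
  haveI hMprob : IsProbabilityMeasure M := by
    constructor
    rw [hM]
    simp only [Measure.smul_apply, Measure.add_apply, measure_univ, smul_eq_mul]
    rw [one_add_one_eq_two, ENNReal.inv_mul_cancel two_ne_zero ENNReal.ofNat_ne_top]
  have hPM : P ≪ M := by
    rw [hM]
    exact (Measure.absolutelyContinuous_of_le (Measure.le_add_right le_rfl)).trans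
      (Measure.absolutelyContinuous_smul (by norm_num))
  have hQM : Q ≪ M := by
    rw [hM]
    exact (Measure.absolutelyContinuous_of_le (Measure.le_add_left le_rfl)).trans
      (Measure.absolutelyContinuous_smul (by norm_num))
  have hMPQ : M ≪ P + Q := by rw [hM]; exact Measure.smul_absolutelyContinuous
  set p : X → ℝ := fun x => (P.rnDeriv M x).toReal with hp
  set q : X → ℝ := fun x => (Q.rnDeriv M x).toReal with hq
  have hpmeas : Measurable p := (Measure.measurable_rnDeriv P M).ennreal_toReal
  have hqmeas : Measurable q := (Measure.measurable_rnDeriv Q M).ennreal_toReal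
  -- the densities sum to 2
  have hsum : ∀ᵐ x ∂M, P.rnDeriv M x + Q.rnDeriv M x = 2 := by
    have h1 := Measure.rnDeriv_add' P Q M
    have h3 := Measure.rnDeriv_smul_right_of_ne_top (P+Q) (P+Q) (r := (2:ℝ≥0∞)⁻¹)
      (by norm_num) (by norm_num)
    have h4 := Measure.rnDeriv_self (P+Q)
    filter_upwards [h1, hMPQ.ae_le h3, hMPQ.ae_le h4] with x hx1 hx3 hx4
    have : (P+Q).rnDeriv M x = 2 := by
      rw [hM, hx3]
      simp only [Pi.smul_apply, smul_eq_mul, hx4, inv_inv, mul_one]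
    rw [← this, hx1]
    simp
  have hpq : ∀ᵐ x ∂M, p x + q x = 2 ∧ p x ≤ 2 ∧ q x ≤ 2 := by
    filter_upwards [hsum] with x hx
    have hP2 : P.rnDeriv M x ≤ 2 := hx ▸ le_add_right le_rfl
    have hQ2 : Q.rnDeriv M x ≤ 2 := hx ▸ le_add_left le_rfl
    have hPt : P.rnDeriv M x ≠ ⊤ := (hP2.trans_lt (by norm_num)).ne
    have hQt : Q.rnDeriv M x ≠ ⊤ := (hQ2.trans_lt (by norm_num)).ne
    refine ⟨?_, ?_, ?_⟩
    · rw [hp, hq]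
      rw [← ENNReal.toReal_add hPt hQt, hx]
      norm_num
    · rw [hp]
      simpa using ENNReal.toReal_mono (by norm_num) hP2
    · rw [hq]
      simpa using ENNReal.toReal_mono (by norm_num) hQ2
  -- integrability of entropy integrands
  have hintPlog : Integrable (fun x => p x * Real.log (p x)) M := by
    refine Integrable.mono' (integrable_const 2)
      ((hpmeas.mul (Real.measurable_log.comp hpmeas)).aestronglyMeasurable) ?_
    filter_upwards [hpq] with x hx
    exact abs_mul_log_le_two ENNReal.toReal_nonneg hx.2.1
  have hintQlog : Integrable (fun x => q x * Real.log (q x)) M := by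
    refine Integrable.mono' (integrable_const 2)
      ((hqmeas.mul (Real.measurable_log.comp hqmeas)).aestronglyMeasurable) ?_
    filter_upwards [hpq] with x hx
    exact abs_mul_log_le_two ENNReal.toReal_nonneg hx.2.2
  -- KL lower bounds
  have hllrP : Integrable (llr P M) P := by
    rw [← integrable_rnDeriv_smul_iff hPM]
    simpa [llr, smul_eq_mul] using hintPlog
  have hllrQ : Integrable (llr Q M) Q := by
    rw [← integrable_rnDeriv_smul_iff hQM]
    simpa [llr, smul_eq_mul] using hintQlog
  have hKLP : ∫ x, p x * Real.log (p x) ∂M ≤ (klDivergence P M).toReal := by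
    rw [klDivergence, if_pos ⟨hPM, hllrP⟩]
    have h := integral_rnDeriv_smul (μ := P) (ν := M) hPM (f := llr P M)
    simp only [smul_eq_mul, llr] at h
    rw [hp, h]
    rcases le_total 0 (∫ x, llr P M x ∂P) with h0 | h0
    · rw [ENNReal.toReal_ofReal h0]; exact le_of_eq (by simp [llr])
    · exact le_trans (le_of_eq (by simp [llr])) (h0.trans ENNReal.toReal_nonneg)
  have hKLQ : ∫ x, q x * Real.log (q x) ∂M ≤ (klDivergence Q M).toReal := by
    rw [klDivergence, if_pos ⟨hQM, hllrQ⟩]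
    have h := integral_rnDeriv_smul (μ := Q) (ν := M) hQM (f := llr Q M)
    simp only [smul_eq_mul, llr] at h
    rw [hq, h]
    rcases le_total 0 (∫ x, llr Q M x ∂Q) with h0 | h0
    · rw [ENNReal.toReal_ofReal h0]; exact le_of_eq (by simp [llr])
    · exact le_trans (le_of_eq (by simp [llr])) (h0.trans ENNReal.toReal_nonneg)
  -- change of measure for integrals of f
  have hIP : ∫ x, f x ∂P = ∫ x, p x * f x ∂M := by
    rw [← integral_rnDeriv_smul hPM (f := f)]
    simp [smul_eq_mul, hp]
  have hIQ : ∫ x, f x ∂Q = ∫ x, q x * f x ∂M := by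
    rw [← integral_rnDeriv_smul hQM (f := f)]
    simp [smul_eq_mul, hq]
  have hp1 : ∫ x, p x ∂M = 1 := by
    have h := integral_rnDeriv_smul (μ := P) (ν := M) hPM (f := fun _ => (1:ℝ))
    simpa [smul_eq_mul, hp] using h
  -- integrability facts on M
  have hintp : Integrable p M := by
    refine Integrable.mono' (integrable_const 2) hpmeas.aestronglyMeasurable ?_
    filter_upwards [hpq] with x hx
    rw [Real.norm_eq_abs, abs_of_nonneg ENNReal.toReal_nonneg]
    exact hx.2.1
  have hintq : Integrable q M := by
    refine Integrable.mono' (integrable_const 2) hqmeas.aestronglyMeasurable ?_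
    filter_upwards [hpq] with x hx
    rw [Real.norm_eq_abs, abs_of_nonneg ENNReal.toReal_nonneg]
    exact hx.2.2
  have hfb : ∀ x, |f x| ≤ 1 := fun x => abs_le.mpr ⟨by linarith [(hf01 x).1], (hf01 x).2⟩
  have hfb2 : ∀ x, |f x - 1/2| ≤ 1/2 :=
    fun x => abs_le.mpr ⟨by linarith [(hf01 x).1], by linarith [(hf01 x).2]⟩
  have hint_pf : Integrable (fun x => p x * f x) M := by
    refine Integrable.mono' (integrable_const 2)
      (hpmeas.mul hmeas).aestronglyMeasurable ?_
    filter_upwards [hpq] with x hx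
    rw [Real.norm_eq_abs, abs_mul, abs_of_nonneg (ENNReal.toReal_nonneg : 0 ≤ p x)]
    calc p x * |f x| ≤ 2 * 1 := by
          exact mul_le_mul hx.2.1 (hfb x) (abs_nonneg _) (by norm_num)
      _ = 2 := by norm_num
  have hint_qf : Integrable (fun x => q x * f x) M := by
    refine Integrable.mono' (integrable_const 2)
      (hqmeas.mul hmeas).aestronglyMeasurable ?_
    filter_upwards [hpq] with x hx
    rw [Real.norm_eq_abs, abs_mul, abs_of_nonneg (ENNReal.toReal_nonneg : 0 ≤ q x)]
    calc q x * |f x| ≤ 2 * 1 := by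
          exact mul_le_mul hx.2.2 (hfb x) (abs_nonneg _) (by norm_num)
      _ = 2 := by norm_num
  have hint_p1 : Integrable (fun x => p x - 1) M := hintp.sub (integrable_const 1)
  have hint_abs : Integrable (fun x => |p x - 1|) M := hint_p1.abs
  have hpb1 : ∀ᵐ x ∂M, |p x - 1| ≤ 1 := by
    filter_upwards [hpq] with x hx
    exact abs_le.mpr ⟨by linarith [ENNReal.toReal_nonneg (a := P.rnDeriv M x)], by linarith [hx.2.1]⟩
  have hint_pmf : Integrable (fun x => (p x - 1) * (f x - 1/2)) M := by
    refine Integrable.mono' (integrable_const (1/2))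
      ((hpmeas.sub measurable_const).mul (hmeas.sub measurable_const)).aestronglyMeasurable ?_
    filter_upwards [hpb1] with x hx
    rw [Real.norm_eq_abs, abs_mul]
    calc |p x - 1| * |f x - 1/2| ≤ 1 * (1/2) :=
          mul_le_mul hx (hfb2 x) (abs_nonneg _) (by norm_num)
      _ = 1/2 := by norm_num
  have hint_sq : Integrable (fun x => (p x - 1)^2) M := by
    refine Integrable.mono' (integrable_const 1)
      ((hpmeas.sub measurable_const).pow_const 2).aestronglyMeasurable ?_
    filter_upwards [hpb1] with x hx
    rw [Real.norm_eq_abs, abs_of_nonneg (sq_nonneg _), ← sq_abs]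
    calc |p x - 1|^2 ≤ 1^2 := pow_le_pow_left₀ (abs_nonneg _) hx 2
      _ = 1 := one_pow 2
  -- the difference as an integral against M
  have hdiff : (∫ x, f x ∂P) - ∫ x, f x ∂Q
      = 2 * ∫ x, (p x - 1) * (f x - 1/2) ∂M := by
    rw [hIP, hIQ, ← integral_sub hint_pf hint_qf]
    have hcongr : ∫ x, (p x * f x - q x * f x) ∂M
        = ∫ x, (2 * ((p x - 1) * (f x - 1/2)) + (p x - 1)) ∂M := by
      refine integral_congr_ae ?_
      filter_upwards [hpq] with x hx
      have : q x = 2 - p x := by linarith [hx.1]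
      rw [this]; ring
    rw [hcongr, integral_add (hint_pmf.const_mul 2) hint_p1,
      integral_sub hintp (integrable_const 1), hp1, integral_const_mul]
    simp
  -- bound by total-variation-like quantity
  have habs : |(∫ x, f x ∂P) - ∫ x, f x ∂Q| ≤ ∫ x, |p x - 1| ∂M := by
    rw [hdiff, abs_mul, abs_two]
    have h1 : |∫ x, (p x - 1) * (f x - 1/2) ∂M| ≤ ∫ x, |(p x - 1) * (f x - 1/2)| ∂M := by
      have := norm_integral_le_integral_norm (fun x => (p x - 1) * (f x - 1/2)) (μ := M)
      simpa only [Real.norm_eq_abs] using this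
    have h2 : ∫ x, |(p x - 1) * (f x - 1/2)| ∂M ≤ ∫ x, |p x - 1| * (1/2) ∂M := by
      refine integral_mono_ae hint_pmf.abs (hint_abs.mul_const _) ?_
      filter_upwards with x
      rw [abs_mul]
      exact mul_le_mul_of_nonneg_left (hfb2 x) (abs_nonneg _)
    have h3 : ∫ x, |p x - 1| * (1/2) ∂M = (1/2) * ∫ x, |p x - 1| ∂M := by
      rw [integral_mul_const]; ring
    calc 2 * |∫ x, (p x - 1) * (f x - 1/2) ∂M| ≤ 2 * ((1/2) * ∫ x, |p x - 1| ∂M) := by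
          have := h1.trans (h2.trans_eq h3)
          linarith
      _ = ∫ x, |p x - 1| ∂M := by ring
  -- Cauchy–Schwarz
  have hCS : ∫ x, |p x - 1| ∂M ≤ Real.sqrt (∫ x, (p x - 1)^2 ∂M) := by
    have hconj : Real.HolderConjugate 2 2 := Real.HolderConjugate.two_two
    have hmem : MemLp (fun x => |p x - 1|) (ENNReal.ofReal 2) M := by
      refine MemLp.of_bound ((hpmeas.sub measurable_const).abs.aestronglyMeasurable) 1 ?_
      filter_upwards [hpb1] with x hx
      rwa [Real.norm_eq_abs, abs_abs]
    have hmem1 : MemLp (fun _ : X => (1:ℝ)) (ENNReal.ofReal 2) M := memLp_const 1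
    have h := integral_mul_le_Lp_mul_Lq_of_nonneg hconj
      (Filter.Eventually.of_forall fun x => abs_nonneg _)
      (Filter.Eventually.of_forall fun _ => zero_le_one) hmem hmem1
    have e1 : ∫ a, |p a - 1| * 1 ∂M = ∫ a, |p a - 1| ∂M := by simp
    have e2 : ∫ a, |p a - 1| ^ (2:ℝ) ∂M = ∫ a, (p a - 1)^2 ∂M := by
      refine integral_congr_ae (Filter.Eventually.of_forall fun a => ?_)
      show |p a - 1| ^ (2:ℝ) = (p a - 1)^2
      rw [Real.rpow_two, sq_abs]
    have e3 : (∫ _ : X, (1:ℝ) ^ (2:ℝ) ∂M) = 1 := by simp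
    rw [e1, e2, e3, Real.one_rpow, mul_one] at h
    calc ∫ x, |p x - 1| ∂M ≤ (∫ x, (p x - 1)^2 ∂M) ^ ((1:ℝ)/2) := h
      _ = Real.sqrt (∫ x, (p x - 1)^2 ∂M) := (Real.sqrt_eq_rpow _).symm
  -- entropy bound
  have hsq_le : ∫ x, (p x - 1)^2 ∂M
      ≤ (klDivergence P M).toReal + (klDivergence Q M).toReal := by
    have hmono : ∫ x, (p x - 1)^2 ∂M
        ≤ ∫ x, (p x * Real.log (p x) + q x * Real.log (q x)) ∂M := by
      refine integral_mono_ae hint_sq (hintPlog.add hintQlog) ?_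
      filter_upwards [hpq] with x hx
      exact entropy_ineq ENNReal.toReal_nonneg ENNReal.toReal_nonneg hx.1
    rw [integral_add hintPlog hintQlog] at hmono
    linarith
  -- conclude
  have hfinal : Real.sqrt 2 * jsDist P Q
      = Real.sqrt ((klDivergence P M).toReal + (klDivergence Q M).toReal) := by
    rw [jsDist, ← hM, ← Real.sqrt_mul (by norm_num : (0:ℝ) ≤ 2)]
    congr 1
    ring
  rw [hfinal]
  exact habs.trans (hCS.trans (Real.sqrt_le_sqrt hsq_le))

end AuxLemmas

/-- Transfer of equal odds across domains: for any measurable `f : X → [0,1]`,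
source domain `S` and target domain `T`,
`EOGAP_T(f) ≤ EOGAP_S(f) + √2 Σ_y Σ_a d_JS(P_T^{X|Y=y,A=a}, P_S^{X|Y=y,A=a})`. -/
theorem eo_gap_domain_generalization
    {X : Type*} [MeasurableSpace X]
    (f : X → ℝ) (hmeas : Measurable f) (hf01 : ∀ x, f x ∈ Set.Icc (0 : ℝ) 1)
    (PS PT : Bool → Bool → Measure X)
    (hPS : ∀ y a, IsProbabilityMeasure (PS y a))
    (hPT : ∀ y a, IsProbabilityMeasure (PT y a)) :
    eoGap f PT
      ≤ eoGap f PS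
        + Real.sqrt 2 * ∑ y : Bool, ∑ a : Bool, jsDist (PT y a) (PS y a) := by
  have key : ∀ y a : Bool,
      |(∫ x, f x ∂(PT y a)) - ∫ x, f x ∂(PS y a)|
        ≤ Real.sqrt 2 * jsDist (PT y a) (PS y a) := by
    intro y a
    haveI := hPT y a
    haveI := hPS y a
    exact abs_integral_sub_le f hmeas hf01 (PT y a) (PS y a)
  have tri : ∀ y : Bool,
      |(∫ x, f x ∂(PT y false)) - ∫ x, f x ∂(PT y true)|
        ≤ |(∫ x, f x ∂(PS y false)) - ∫ x, f x ∂(PS y true)|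
          + (Real.sqrt 2 * jsDist (PT y false) (PS y false)
            + Real.sqrt 2 * jsDist (PT y true) (PS y true)) := by
    intro y
    have h1 := key y false
    have h2 := key y true
    have t1 : |(∫ x, f x ∂(PT y false)) - ∫ x, f x ∂(PT y true)|
        ≤ |(∫ x, f x ∂(PT y false)) - ∫ x, f x ∂(PS y false)|
          + |(∫ x, f x ∂(PS y false)) - ∫ x, f x ∂(PT y true)| :=
      abs_sub_le _ _ _
    have t2 : |(∫ x, f x ∂(PS y false)) - ∫ x, f x ∂(PT y true)|
        ≤ |(∫ x, f x ∂(PS y false)) - ∫ x, f x ∂(PS y true)|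
          + |(∫ x, f x ∂(PS y true)) - ∫ x, f x ∂(PT y true)| :=
      abs_sub_le _ _ _
    have t3 : |(∫ x, f x ∂(PS y true)) - ∫ x, f x ∂(PT y true)|
        = |(∫ x, f x ∂(PT y true)) - ∫ x, f x ∂(PS y true)| := abs_sub_comm _ _
    linarith
  have h1 := tri false
  have h2 := tri true
  simp only [eoGap, Fintype.sum_bool]
  have hexp : Real.sqrt 2 * ((jsDist (PT true true) (PS true true)
        + jsDist (PT true false) (PS true false))
      + (jsDist (PT false true) (PS false true)
        + jsDist (PT false false) (PS false false)))
      = Real.sqrt 2 * jsDist (PT true false) (PS true false)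
        + Real.sqrt 2 * jsDist (PT true true) (PS true true)
        + Real.sqrt 2 * jsDist (PT false false) (PS false false)
        + Real.sqrt 2 * jsDist (PT false true) (PS false true) := by ring
  rw [hexp]
  linarith
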